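/- The nonempty finite subsets of a continuous dcpo D, together with the Egli-Milner relation ≪_EM, form an abstract basis. -/

import Mathlib

/-- `x` is way below `y`. -/
def wayBelow {P : Type*} [Preorder P] (x y : P) : Prop :=
  ∀ S : Set P, S.Nonempty → DirectedOn (· ≤ ·) S → ∀ s : P, IsLUB S s → y ≤ s →
    ∃ z ∈ S, x ≤ z

/-- A poset is a dcpo if every nonempty directed subset has a supremum. -/
def IsDcpo (P : Type*) [Preorder P] : Prop :=
  ∀ S : Set P, S.Nonempty → DirectedOn (· ≤ ·) S → ∃ s : P, IsLUB S s

/-- `B` is a (domain-theoretic) basis for `P`. -/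
def IsDomainBasis {P : Type*} [Preorder P] (B : Set P) : Prop :=
  ∀ x : P, ∃ S : Set P, S ⊆ B ∧ S.Nonempty ∧ DirectedOn (· ≤ ·) S ∧
    (∀ a ∈ S, wayBelow a x) ∧ IsLUB S x

/-- A poset is continuous if it has a basis (equivalently, the whole poset is a basis). -/
def IsContinuousPoset (P : Type*) [Preorder P] : Prop :=
  IsDomainBasis (Set.univ : Set P)

/-- The Scott topology on a poset. -/
def scottTop (P : Type*) [Preorder P] : TopologicalSpace P where
  IsOpen U := (∀ x ∈ U, ∀ y, x ≤ y → y ∈ U) ∧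
    ∀ S : Set P, S.Nonempty → DirectedOn (· ≤ ·) S → ∀ s : P, IsLUB S s → s ∈ U →
      (S ∩ U).Nonempty
  isOpen_univ := ⟨fun _ _ _ _ => trivial,
    fun S hS _ _ _ _ => hS.imp fun x hx => ⟨hx, trivial⟩⟩
  isOpen_inter := by
    rintro U V ⟨hUup, hUin⟩ ⟨hVup, hVin⟩
    refine ⟨fun x hx y hxy => ⟨hUup x hx.1 y hxy, hVup x hx.2 y hxy⟩, ?_⟩
    rintro S hS hdir s hs ⟨hsU, hsV⟩
    obtain ⟨a, haS, haU⟩ := hUin S hS hdir s hs hsU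
    obtain ⟨b, hbS, hbV⟩ := hVin S hS hdir s hs hsV
    obtain ⟨c, hcS, hac, hbc⟩ := hdir a haS b hbS
    exact ⟨c, hcS, hUup a haU c hac, hVup b hbV c hbc⟩
  isOpen_sUnion := by
    intro C hC
    refine ⟨fun x hx y hxy => ?_, ?_⟩
    · obtain ⟨t, htC, hxt⟩ := hx
      exact ⟨t, htC, (hC t htC).1 x hxt y hxy⟩
    · rintro S hS hdir s hs ⟨t, htC, hst⟩
      obtain ⟨a, haS, hat⟩ := (hC t htC).2 S hS hdir s hs hst
      exact ⟨a, haS, t, htC, hat⟩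

/-- A continuous poset is bicontinuous if the way-below relation admits the dual
characterization via filtered infima and each `↟x` is filtered with infimum `x`. -/
def IsBicontinuous (P : Type*) [Preorder P] : Prop :=
  IsContinuousPoset P ∧
  (∀ x y : P, wayBelow x y ↔
    ∀ S : Set P, S.Nonempty → DirectedOn (· ≥ ·) S → ∀ i : P, IsGLB S i → i ≤ x →
      ∃ s ∈ S, s ≤ y) ∧
  (∀ x : P, {a | wayBelow x a}.Nonempty ∧ DirectedOn (· ≥ ·) {a | wayBelow x a} ∧
    IsGLB {a | wayBelow x a} x)

/-- The interval topology on a bicontinuous poset, with basic open sets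
`(a,b) = {x | a ≪ x ≪ b}`. -/
def intervalTop (P : Type*) [Preorder P] : TopologicalSpace P :=
  .generateFrom {s | ∃ a b : P, s = {x | wayBelow a x ∧ wayBelow x b}}

/-- A globally hyperbolic poset: bicontinuous, with all closed intervals compact
in the interval topology. -/
def IsGloballyHyperbolic (P : Type*) [PartialOrder P] : Prop :=
  IsBicontinuous P ∧ ∀ a b : P, a ≤ b → @IsCompact P (intervalTop P) (Set.Icc a b)

/-- The Egli–Milner way-below relation on subsets of a dcpo. -/
def emWayBelow {D : Type*} [Preorder D] (A B : Set D) : Prop :=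
  (∀ a ∈ A, ∃ b ∈ B, wayBelow a b) ∧ (∀ b ∈ B, ∃ a ∈ A, wayBelow a b)

lemma wayBelow_le {D : Type*} [PartialOrder D] {a b : D} (h : wayBelow a b) : a ≤ b := by
  obtain ⟨z, hz, haz⟩ := h {b} ⟨b, rfl⟩ (directedOn_singleton b) b isLUB_singleton le_rfl
  rwa [Set.mem_singleton_iff.1 hz] at haz

lemma le_wayBelow_le {D : Type*} [PartialOrder D] {a' a b b' : D}
    (ha : a' ≤ a) (h : wayBelow a b) (hb : b ≤ b') : wayBelow a' b' := by
  intro S hS hdir s hs hle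
  obtain ⟨z, hz, haz⟩ := h S hS hdir s hs (hb.trans hle)
  exact ⟨z, hz, ha.trans haz⟩

lemma interp_basis {D : Type*} [PartialOrder D] (hcont : IsContinuousPoset D) (x : D) :
    {d | ∃ e, wayBelow d e ∧ wayBelow e x}.Nonempty ∧
    DirectedOn (· ≤ ·) {d | ∃ e, wayBelow d e ∧ wayBelow e x} ∧
    IsLUB {d | ∃ e, wayBelow d e ∧ wayBelow e x} x := by
  obtain ⟨T, -, hTne, hTdir, hTwb, hTlub⟩ := hcont x
  refine ⟨?_, ?_, ?_, ?_⟩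
  · obtain ⟨t, ht⟩ := hTne
    obtain ⟨T', -, hT'ne, -, hT'wb, -⟩ := hcont t
    obtain ⟨u, hu⟩ := hT'ne
    exact ⟨u, t, hT'wb u hu, hTwb t ht⟩
  · rintro d1 ⟨e1, hd1, he1⟩ d2 ⟨e2, hd2, he2⟩
    obtain ⟨t1, ht1, he1t⟩ := he1 T hTne hTdir x hTlub le_rfl
    obtain ⟨t2, ht2, he2t⟩ := he2 T hTne hTdir x hTlub le_rfl
    obtain ⟨t, htT, h1t, h2t⟩ := hTdir t1 ht1 t2 ht2
    obtain ⟨T', -, hT'ne, hT'dir, hT'wb, hT'lub⟩ := hcont t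
    obtain ⟨u1, hu1, hdu1⟩ := hd1 T' hT'ne hT'dir t hT'lub (he1t.trans h1t)
    obtain ⟨u2, hu2, hdu2⟩ := hd2 T' hT'ne hT'dir t hT'lub (he2t.trans h2t)
    obtain ⟨u, huT', hu1u, hu2u⟩ := hT'dir u1 hu1 u2 hu2
    exact ⟨u, ⟨t, hT'wb u huT', hTwb t htT⟩, hdu1.trans hu1u, hdu2.trans hu2u⟩
  · rintro d ⟨e, hde, hex⟩
    exact (wayBelow_le hde).trans (wayBelow_le hex)
  · intro u hu
    refine hTlub.2 fun t ht => ?_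
    obtain ⟨T', -, -, -, hT'wb, hT'lub⟩ := hcont t
    exact hT'lub.2 fun v hv => hu ⟨t, hT'wb v hv, hTwb t ht⟩

lemma exists_ub_of_finite {D : Type*} [Preorder D] {S : Set D} (hne : S.Nonempty)
    (hdir : DirectedOn (· ≤ ·) S) {A : Set D} (hA : A.Finite)
    (h : ∀ a ∈ A, ∃ s ∈ S, a ≤ s) : ∃ s ∈ S, ∀ a ∈ A, a ≤ s := by
  revert h
  induction A, hA using Set.Finite.induction_on with
  | empty =>
    exact fun _ => hne.imp fun s hs => ⟨hs, fun a ha => absurd ha (Set.notMem_empty a)⟩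
  | insert hx hfin ih =>
    intro h
    obtain ⟨s1, hs1, hall⟩ := ih fun a ha => h a (Set.mem_insert_of_mem _ ha)
    obtain ⟨s2, hs2, ha2⟩ := h _ (Set.mem_insert _ _)
    obtain ⟨s, hsS, h1, h2⟩ := hdir s1 hs1 s2 hs2
    refine ⟨s, hsS, fun a ha => ?_⟩
    rcases Set.mem_insert_iff.1 ha with rfl | ha
    · exact ha2.trans h2
    · exact (hall a ha).trans h1

lemma finite_interp {D : Type*} [PartialOrder D] (hcont : IsContinuousPoset D)
    {A : Set D} (hA : A.Finite) {b : D} (h : ∀ a ∈ A, wayBelow a b) :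
    ∃ y, (∀ a ∈ A, wayBelow a y) ∧ wayBelow y b := by
  obtain ⟨hne, hdir, hlub⟩ := interp_basis hcont b
  obtain ⟨s, hsS, hbound⟩ := exists_ub_of_finite hne hdir hA
    (fun a ha => h a ha _ hne hdir b hlub le_rfl)
  obtain ⟨e, hse, heb⟩ := hsS
  exact ⟨e, fun a ha => le_wayBelow_le (hbound a ha) hse le_rfl, heb⟩

/-- The nonempty finite subsets of a continuous dcpo under the Egli–Milner
way-below relation form an abstract basis: the relation is transitive and
interpolative. -/
theorem finsets_emWayBelow_abstract_basis {D : Type*} [PartialOrder D]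
    (hdcpo : IsDcpo D) (hcont : IsContinuousPoset D) :
    (∀ F G H : {F : Set D // F.Finite ∧ F.Nonempty},
      emWayBelow F.1 G.1 → emWayBelow G.1 H.1 → emWayBelow F.1 H.1) ∧
    (∀ M : Set {F : Set D // F.Finite ∧ F.Nonempty}, M.Finite →
      ∀ x : {F : Set D // F.Finite ∧ F.Nonempty},
        (∀ m ∈ M, emWayBelow m.1 x.1) →
        ∃ y : {F : Set D // F.Finite ∧ F.Nonempty},
          (∀ m ∈ M, emWayBelow m.1 y.1) ∧ emWayBelow y.1 x.1) := by
  constructor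
  · rintro F G H ⟨hFG1, hFG2⟩ ⟨hGH1, hGH2⟩
    constructor
    · intro a ha
      obtain ⟨b, hb, hab⟩ := hFG1 a ha
      obtain ⟨c, hc, hbc⟩ := hGH1 b hb
      exact ⟨c, hc, le_wayBelow_le le_rfl hab (wayBelow_le hbc)⟩
    · intro c hc
      obtain ⟨b, hb, hbc⟩ := hGH2 c hc
      obtain ⟨a, ha, hab⟩ := hFG2 b hb
      exact ⟨a, ha, le_wayBelow_le le_rfl hab (wayBelow_le hbc)⟩
  · intro M hMfin x hM
    classical
    set U : Set D := ⋃ m ∈ M, m.1 with hUdef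
    have hUfin : U.Finite := hMfin.biUnion fun m _ => m.2.1
    have hch : ∀ b ∈ x.1, ∃ y, (∀ a ∈ U ∩ {a | wayBelow a b}, wayBelow a y) ∧ wayBelow y b :=
      fun b _ => finite_interp hcont (hUfin.inter_of_left _) (fun a ha => ha.2)
    choose f hf1 hf2 using hch
    haveI := x.2.1.to_subtype
    refine ⟨⟨Set.range (fun p : x.1 => f p.1 p.2), Set.finite_range _, ?_⟩, ?_, ?_, ?_⟩
    · obtain ⟨b, hb⟩ := x.2.2
      exact ⟨f b hb, ⟨b, hb⟩, rfl⟩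
    · intro m hm
      constructor
      · intro a ha
        obtain ⟨b, hb, hab⟩ := (hM m hm).1 a ha
        exact ⟨f b hb, ⟨⟨b, hb⟩, rfl⟩, hf1 b hb a ⟨Set.mem_biUnion hm ha, hab⟩⟩
      · rintro y ⟨⟨b, hb⟩, rfl⟩
        obtain ⟨a, ha, hab⟩ := (hM m hm).2 b hb
        exact ⟨a, ha, hf1 b hb a ⟨Set.mem_biUnion hm ha, hab⟩⟩
    · rintro y ⟨⟨b, hb⟩, rfl⟩
      exact ⟨b, hb, hf2 b hb⟩
    · intro b hb
      exact ⟨f b hb, ⟨⟨b, hb⟩, rfl⟩, hf2 b hb⟩
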